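/- Let f : ℝ^d → ℝ^d be a linear map whose image of the open unit ball 𝕂^d is contained in the closed Euclidean ball of radius λ < 1 centered at the origin. Then f restricted to 𝕂^d is λ-Lipschitz with respect to the hyperbolic metric of the Klein model. -/

import Mathlib

/-- `kleinDistRel x y r` says that `r` is the hyperbolic distance between `x` and `y`
in the Klein (projective) model (one-half the Hilbert metric of the unit ball). -/
def kleinDistRel {d : ℕ} (x y : EuclideanSpace ℝ (Fin d)) (r : ℝ) : Prop :=
  (x = y ∧ r = 0) ∨
  ∃ x' y' : EuclideanSpace ℝ (Fin d), ‖x'‖ = 1 ∧ ‖y'‖ = 1 ∧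
    (∃ s : ℝ, s < 0 ∧ x' = x + s • (y - x)) ∧
    (∃ t : ℝ, 1 < t ∧ y' = x + t • (y - x)) ∧
    r = (1 / 2) * Real.log ((‖x - y'‖ * ‖y - x'‖) / (‖x - x'‖ * ‖y - y'‖))

open Real
set_option maxHeartbeats 2000000


noncomputable def hE (R : ℝ) : ℝ := Real.exp (Real.log R / 2)

lemma hE_pos (R : ℝ) : 0 < hE R := Real.exp_pos _

lemma hE_sq {R : ℝ} (hR : 0 < R) : hE R ^ 2 = R := by
  have : hE R ^ 2 = Real.exp (Real.log R / 2 + Real.log R / 2) := by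
    rw [Real.exp_add, hE]; ring
  rw [this]
  have : Real.log R / 2 + Real.log R / 2 = Real.log R := by ring
  rw [this, Real.exp_log hR]

lemma sinh_half_log_div {R1 R2 : ℝ} (h1 : 0 < R1) (h2 : 0 < R2) :
    Real.sinh ((Real.log R2 - Real.log R1) / 2) = (R2 - R1) / (2 * (hE R1 * hE R2)) := by
  have e1 := hE_pos R1
  have e2 := hE_pos R2
  have q1 := hE_sq h1
  have q2 := hE_sq h2
  rw [Real.sinh_eq]
  have h : (Real.log R2 - Real.log R1) / 2 = Real.log R2 / 2 - Real.log R1 / 2 := by ring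
  rw [h, Real.exp_sub, neg_sub, Real.exp_sub]
  show (hE R2 / hE R1 - hE R1 / hE R2) / 2 = _
  field_simp
  nlinarith [q1, q2, sq_nonneg (hE R1), sq_nonneg (hE R2), mul_pos e1 e2]

lemma cosh_half_log {R : ℝ} (hR : 0 < R) :
    Real.cosh (Real.log R / 2) = (R + 1) / (2 * hE R) := by
  have e := hE_pos R
  have q := hE_sq hR
  rw [Real.cosh_eq]
  have h : -(Real.log R / 2) = 0 - Real.log R / 2 := by ring
  rw [h, Real.exp_sub, Real.exp_zero]
  show (hE R + 1 / hE R) / 2 = _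
  field_simp
  nlinarith [q]


lemma coth_midpoint {X Y : ℝ} (hX : 0 < X) (hY : 0 < Y) :
    2 * (Real.cosh ((X + Y) / 2) / Real.sinh ((X + Y) / 2)) ≤
      Real.cosh X / Real.sinh X + Real.cosh Y / Real.sinh Y := by
  set M := (X + Y) / 2 with hMdef
  have hM : 0 < M := by rw [hMdef]; linarith
  have hXY : X + Y = 2 * M := by rw [hMdef]; ring
  have sX : 0 < Real.sinh X := Real.sinh_pos_iff.2 hX
  have sY : 0 < Real.sinh Y := Real.sinh_pos_iff.2 hY
  have sM : 0 < Real.sinh M := Real.sinh_pos_iff.2 hM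
  have cM : 0 < Real.cosh M := Real.cosh_pos _
  have hadd : Real.cosh X / Real.sinh X + Real.cosh Y / Real.sinh Y
      = Real.sinh (X + Y) / (Real.sinh X * Real.sinh Y) := by
    rw [Real.sinh_add]; field_simp; ring
  have h2M : Real.sinh (X + Y) = 2 * Real.sinh M * Real.cosh M := by
    rw [hXY, Real.sinh_two_mul]
  have key : Real.sinh X * Real.sinh Y ≤ Real.sinh M ^ 2 := by
    have e1 : Real.sinh X * Real.sinh Y = (Real.cosh (X + Y) - Real.cosh (X - Y)) / 2 := by
      rw [Real.cosh_add, Real.cosh_sub]; ring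
    have e2 : Real.cosh (X + Y) = Real.cosh M ^ 2 + Real.sinh M ^ 2 := by
      rw [hXY, Real.cosh_two_mul]
    have e3 := Real.cosh_sq M
    have e4 := Real.one_le_cosh (X - Y)
    rw [e1, e2]; linarith
  rw [hadd, h2M]
  have hL : 2 * (Real.cosh M / Real.sinh M) = (2 * Real.cosh M) / Real.sinh M := by ring
  rw [hL, div_le_div_iff₀ sM (mul_pos sX sY)]
  nlinarith [mul_pos sX sY, key, mul_le_mul_of_nonneg_left key (by positivity : (0:ℝ) ≤ 2 * Real.cosh M)]

lemma coth_antitone {X Y : ℝ} (hX : 0 < X) (hXY : X ≤ Y) :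
    Real.cosh Y / Real.sinh Y ≤ Real.cosh X / Real.sinh X := by
  have sX : 0 < Real.sinh X := Real.sinh_pos_iff.2 hX
  have sY : 0 < Real.sinh Y := Real.sinh_pos_iff.2 (lt_of_lt_of_le hX hXY)
  rw [div_le_div_iff₀ sY sX]
  have h : 0 ≤ Real.sinh (Y - X) := Real.sinh_nonneg_iff.2 (by linarith)
  rw [Real.sinh_sub] at h
  linarith

lemma core_log_sinh {h m : ℝ} (hh : 0 < h) (hm : 0 < m) :
    m * (Real.cosh (h + m / 2) / Real.sinh (h + m / 2)) ≤
      Real.log (Real.sinh (h + m)) - Real.log (Real.sinh h) := by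
  set c : ℝ := h + m / 2 with hc
  have hc0 : 0 < c := by rw [hc]; linarith
  set K : ℝ := Real.cosh c / Real.sinh c with hK
  set G : ℝ → ℝ := fun δ => Real.log (Real.sinh (c + δ)) - Real.log (Real.sinh (c - δ)) - 2 * δ * K with hG
  have hderiv : ∀ δ ∈ Set.Icc (0:ℝ) (m/2), HasDerivAt G
      (Real.cosh (c + δ) / Real.sinh (c + δ) + Real.cosh (c - δ) / Real.sinh (c - δ) - 2 * K) δ := by
    intro δ hδ
    obtain ⟨hδ0, hδm⟩ := hδ
    have hp : 0 < c + δ := by linarith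
    have hq : 0 < c - δ := by rw [hc]; linarith [hδm]
    have sp : 0 < Real.sinh (c + δ) := Real.sinh_pos_iff.2 hp
    have sq' : 0 < Real.sinh (c - δ) := Real.sinh_pos_iff.2 hq
    have d1 : HasDerivAt (fun δ : ℝ => c + δ) 1 δ := by
      simpa using (hasDerivAt_id δ).const_add c
    have d2 : HasDerivAt (fun δ : ℝ => c - δ) (-1) δ := by
      simpa using (hasDerivAt_id δ).const_sub c
    have d3 : HasDerivAt (fun δ : ℝ => Real.sinh (c + δ)) (Real.cosh (c + δ) * 1) δ :=
      (Real.hasDerivAt_sinh (c + δ)).comp δ d1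
    have d4 : HasDerivAt (fun δ : ℝ => Real.sinh (c - δ)) (Real.cosh (c - δ) * (-1)) δ :=
      (Real.hasDerivAt_sinh (c - δ)).comp δ d2
    have d5 : HasDerivAt (fun δ : ℝ => Real.log (Real.sinh (c + δ)))
        ((Real.sinh (c + δ))⁻¹ * (Real.cosh (c + δ) * 1)) δ :=
      by have := (Real.hasDerivAt_log (ne_of_gt sp)).comp δ d3; exact this
    have d6 : HasDerivAt (fun δ : ℝ => Real.log (Real.sinh (c - δ)))
        ((Real.sinh (c - δ))⁻¹ * (Real.cosh (c - δ) * (-1))) δ :=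
      by have := (Real.hasDerivAt_log (ne_of_gt sq')).comp δ d4; exact this
    have d7 : HasDerivAt (fun δ : ℝ => 2 * δ * K) (2 * K) δ := by
      simpa using ((hasDerivAt_id δ).const_mul 2).mul_const K
    have := (d5.sub d6).sub d7
    refine this.congr_deriv ?_
    ring
  have hmono : MonotoneOn G (Set.Icc 0 (m/2)) := by
    apply monotoneOn_of_deriv_nonneg (convex_Icc _ _)
    · exact ContinuousOn.congr (continuousOn_of_forall_continuousAt
        (fun δ hδ => (hderiv δ hδ).continuousAt)) (fun x hx => rfl)
    · intro δ hδ
      rw [interior_Icc] at hδ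
      exact (hderiv δ (Set.mem_Icc_of_Ioo hδ)).differentiableAt.differentiableWithinAt
    · intro δ hδ
      rw [interior_Icc] at hδ
      rw [(hderiv δ (Set.mem_Icc_of_Ioo hδ)).deriv]
      have hp : 0 < c + δ := by linarith [hδ.1, hc0]
      have hq : 0 < c - δ := by rw [hc]; linarith [hδ.2]
      have := coth_midpoint hp hq
      have harg : (c + δ + (c - δ)) / 2 = c := by ring
      rw [harg] at this
      rw [hK]
      linarith
  have h0 : G 0 ≤ G (m/2) := hmono (Set.left_mem_Icc.2 (by linarith)) (Set.right_mem_Icc.2 (by linarith)) (by linarith)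
  have hG0 : G 0 = 0 := by simp [hG]
  have hGm : G (m/2) = Real.log (Real.sinh (h + m)) - Real.log (Real.sinh h) - m * K := by
    show Real.log (Real.sinh (c + m/2)) - Real.log (Real.sinh (c - m/2)) - 2 * (m/2) * K = _
    have e1 : c + m/2 = h + m := by rw [hc]; ring
    have e2 : c - m/2 = h := by rw [hc]; ring
    rw [e1, e2]; ring
  rw [hG0, hGm] at h0
  rw [hK, hc] at h0
  linarith

lemma le_of_sq_le_sq' {u v : ℝ} (hu : 0 < u) (hv : 0 < v) (h : u ^ 2 ≤ v ^ 2) : u ≤ v := by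
  nlinarith

lemma sinh_half_log {R : ℝ} (hR : 0 < R) :
    Real.sinh (Real.log R / 2) = (R - 1) / (2 * hE R) := by
  have h := sinh_half_log_div (one_pos) hR
  simp only [Real.log_one] at h
  have e : (Real.log R - 0) / 2 = Real.log R / 2 := by ring
  rw [e] at h
  rw [h]
  have : hE 1 = 1 := by simp [hE]
  rw [this]
  ring_nf

lemma main_real {lam A s t s' t' : ℝ} (hlam0 : 0 < lam) (hlam1 : lam < 1) (hA : 0 < A)
    (hs : s < 0) (ht : 1 < t) (hs' : s' < 0) (ht' : 1 < t')
    (hC1 : A * ((s - s') * (s - t')) ≤ lam ^ 2 - 1)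
    (hC2 : A * ((t - s') * (t - t')) ≤ lam ^ 2 - 1)
    (hC3 : A * (t' - s') ^ 2 ≤ 4) :
    1 / 2 * Real.log (t' * (1 - s') / (-s' * (t' - 1))) ≤
      lam * (1 / 2 * Real.log (t * (1 - s) / (-s * (t - 1)))) := by
  -- basic orderings
  have hl2 : lam ^ 2 < 1 := by
    have h1 : 0 < (1 - lam) * (1 + lam) := mul_pos (by linarith) (by linarith)
    have h2 : (1 - lam) * (1 + lam) = 1 - lam ^ 2 := by ring
    linarith
  have hss' : s' < s := by
    by_contra hcon
    push_neg at hcon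
    have h1 : 0 ≤ (s' - s) * (t' - s) := mul_nonneg (by linarith) (by linarith)
    have h2 := mul_nonneg hA.le h1
    have h3 : A * ((s' - s) * (t' - s)) = A * ((s - s') * (s - t')) := by ring
    linarith
  have htt' : t < t' := by
    by_contra hcon
    push_neg at hcon
    have h1 : 0 ≤ (t - s') * (t - t') := mul_nonneg (by linarith) (by linarith)
    have h2 := mul_nonneg hA.le h1
    linarith
  set R : ℝ → ℝ := fun σ => (σ - s') / (t' - σ) with hR
  have hRpos : ∀ σ : ℝ, s' < σ → σ < t' → 0 < R σ := by
    intro σ h1 h2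
    exact div_pos (by linarith) (by linarith)
  have hRmono : ∀ σ τ : ℝ, s' < σ → σ < τ → τ < t' → R σ < R τ := by
    intro σ τ h1 h2 h3
    rw [hR]
    simp only
    rw [div_lt_div_iff₀ (by linarith) (by linarith)]
    have e : (τ - s') * (t' - σ) - (σ - s') * (t' - τ) = (t' - s') * (τ - σ) := by ring
    have e2 : 0 < (t' - s') * (τ - σ) := mul_pos (by linarith) (by linarith)
    linarith
  have hRs := hRpos s hss' (by linarith)
  have hR0 := hRpos 0 hs' (by linarith)
  have hR1 := hRpos 1 (by linarith) ht'
  have hRt := hRpos t (by linarith) htt'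
  set α : ℝ := Real.log (R s) / 2 with hα
  set a : ℝ := Real.log (R 0) / 2 with ha
  set b : ℝ := Real.log (R 1) / 2 with hb
  set β : ℝ := Real.log (R t) / 2 with hβ
  have hαa : α < a := by
    rw [hα, ha]
    have := Real.log_lt_log hRs (hRmono s 0 hss' hs (by linarith))
    linarith
  have hab : a < b := by
    rw [ha, hb]
    have := Real.log_lt_log hR0 (hRmono 0 1 hs' one_pos ht')
    linarith
  have hbβ : b < β := by
    rw [hb, hβ]
    have := Real.log_lt_log hR1 (hRmono 1 t (by linarith) ht htt')
    linarith
  set p : ℝ := a - α with hp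
  set mm : ℝ := b - a with hmm
  set q : ℝ := β - b with hq
  have hp0 : 0 < p := by rw [hp]; linarith
  have hm0 : 0 < mm := by rw [hmm]; linarith
  have hq0 : 0 < q := by rw [hq]; linarith
  -- sinh expressions
  have hsp : Real.sinh p = (R 0 - R s) / (2 * (hE (R s) * hE (R 0))) := by
    have e : p = (Real.log (R 0) - Real.log (R s)) / 2 := by rw [hp, ha, hα]; ring
    rw [e, sinh_half_log_div hRs hR0]
  have hspm : Real.sinh (p + mm) = (R 1 - R s) / (2 * (hE (R s) * hE (R 1))) := by
    have e : p + mm = (Real.log (R 1) - Real.log (R s)) / 2 := by rw [hp, hmm, ha, hb, hα]; ring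
    rw [e, sinh_half_log_div hRs hR1]
  have hsq : Real.sinh q = (R t - R 1) / (2 * (hE (R 1) * hE (R t))) := by
    have e : q = (Real.log (R t) - Real.log (R 1)) / 2 := by rw [hq, hb, hβ]; ring
    rw [e, sinh_half_log_div hR1 hRt]
  have hsqm : Real.sinh (q + mm) = (R t - R 0) / (2 * (hE (R 0) * hE (R t))) := by
    have e : q + mm = (Real.log (R t) - Real.log (R 0)) / 2 := by rw [hq, hmm, ha, hb, hβ]; ring
    rw [e, sinh_half_log_div hR0 hRt]
  -- difference positivity
  have hd1 : 0 < R 0 - R s := by linarith [hRmono s 0 hss' hs (by linarith : (0:ℝ) < t')]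
  have hd2 : 0 < R 1 - R s := by linarith [hRmono s 1 hss' (by linarith) ht']
  have hd3 : 0 < R t - R 1 := by linarith [hRmono 1 t (by linarith) ht htt']
  have hd4 : 0 < R t - R 0 := by linarith [hRmono 0 t hs' (by linarith) htt']
  have hEs := hE_pos (R s); have hE0 := hE_pos (R 0); have hE1 := hE_pos (R 1); have hEt := hE_pos (R t)
  -- key quotient identity
  have hquot : (Real.sinh (p + mm) * Real.sinh (q + mm)) / (Real.sinh p * Real.sinh q)
      = t * (1 - s) / (-s * (t - 1)) := by
    rw [hsp, hspm, hsq, hsqm]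
    have step1 : ((R 1 - R s) / (2 * (hE (R s) * hE (R 1))) * ((R t - R 0) / (2 * (hE (R 0) * hE (R t)))))
        / ((R 0 - R s) / (2 * (hE (R s) * hE (R 0))) * ((R t - R 1) / (2 * (hE (R 1) * hE (R t)))))
        = ((R 1 - R s) * (R t - R 0)) / ((R 0 - R s) * (R t - R 1)) := by
      field_simp
    rw [step1]
    have hdiff : ∀ σ τ : ℝ, σ < t' → τ < t' → R τ - R σ = ((t' - s') * (τ - σ)) / ((t' - σ) * (t' - τ)) := by
      intro σ τ h1 h2
      rw [hR]
      simp only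
      rw [div_sub_div _ _ (by linarith : t' - τ ≠ 0) (by linarith : t' - σ ≠ 0)]
      have e : (τ - s') * (t' - σ) - (t' - τ) * (σ - s') = (t' - s') * (τ - σ) := by ring
      rw [e, mul_comm (t' - τ) (t' - σ)]
    rw [hdiff s 1 (by linarith) (by linarith), hdiff 0 t (by linarith) (by linarith),
      hdiff s 0 (by linarith) (by linarith), hdiff 1 t (by linarith) (by linarith)]
    have n1 : t' - s ≠ 0 := by linarith
    have n2 : t' - 1 ≠ 0 := by linarith
    have n3 : t' - t ≠ 0 := by linarith
    have n4 : t' ≠ 0 := by linarith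
    have n5 : t' - s' ≠ 0 := by linarith
    have n6 : s ≠ 0 := by linarith
    have n7 : t - 1 ≠ 0 := by linarith
    have n8 : t' - (0:ℝ) ≠ 0 := by norm_num; linarith
    field_simp
    ring
  -- positivity of sinh values
  have sp := Real.sinh_pos_iff.2 hp0
  have sq0 := Real.sinh_pos_iff.2 hq0
  have spm := Real.sinh_pos_iff.2 (by linarith : (0:ℝ) < p + mm)
  have sqm := Real.sinh_pos_iff.2 (by linarith : (0:ℝ) < q + mm)
  -- log split
  have hlogsplit : Real.log (t * (1 - s) / (-s * (t - 1)))
      = Real.log (Real.sinh (p + mm)) + Real.log (Real.sinh (q + mm))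
        - Real.log (Real.sinh p) - Real.log (Real.sinh q) := by
    rw [← hquot, Real.log_div (by positivity) (by positivity),
      Real.log_mul (ne_of_gt spm) (ne_of_gt sqm), Real.log_mul (ne_of_gt sp) (ne_of_gt sq0)]
    ring
  -- core bounds
  have hcore1 := core_log_sinh hp0 hm0
  have hcore2 := core_log_sinh hq0 hm0
  have hX : (0:ℝ) < p + mm / 2 := by linarith
  have hY : (0:ℝ) < q + mm / 2 := by linarith
  have hmid := coth_midpoint hX hY
  -- rho
  set Rl : ℝ := (1 + lam) / (1 - lam) with hRl
  have hRlpos : 0 < Rl := div_pos (by linarith) (by linarith)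
  have hRl1 : 1 < Rl := by rw [hRl, lt_div_iff₀ (by linarith)]; linarith
  set rho : ℝ := Real.log Rl / 2 with hrho
  have hrho0 : 0 < rho := by
    rw [hrho]
    have := Real.log_pos hRl1
    linarith
  have hERl := hE_pos Rl
  have hERl2 := hE_sq hRlpos
  have hcoshrho : Real.cosh rho = (Rl + 1) / (2 * hE Rl) := by rw [hrho]; exact cosh_half_log hRlpos
  have hsinhrho : Real.sinh rho = (Rl - 1) / (2 * hE Rl) := by rw [hrho]; exact sinh_half_log hRlpos
  have hsinhrho0 : 0 < Real.sinh rho := Real.sinh_pos_iff.2 hrho0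
  have hcothrho : Real.cosh rho / Real.sinh rho = 1 / lam := by
    rw [hcoshrho, hsinhrho]
    have hRlm1 : Rl - 1 ≠ 0 := by linarith
    have hEne : hE Rl ≠ 0 := ne_of_gt hERl
    have step : (Rl + 1) / (2 * hE Rl) / ((Rl - 1) / (2 * hE Rl)) = (Rl + 1) / (Rl - 1) := by
      field_simp
    rw [step, div_eq_div_iff hRlm1 (ne_of_gt hlam0), hRl]
    have h1 : (1:ℝ) - lam ≠ 0 := by linarith
    field_simp
    ring
  -- cosh squared identities
  have hcoshrho2 : Real.cosh rho ^ 2 * (1 - lam ^ 2) = 1 := by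
    rw [hcoshrho, div_pow, mul_pow, hERl2, hRl]
    have h1 : (1:ℝ) - lam ≠ 0 := by linarith
    have h2 : (1:ℝ) + lam ≠ 0 := by linarith
    field_simp
    ring
  -- bound for alpha
  have hPs : (0:ℝ) < (s - s') * (t' - s) := mul_pos (by linarith) (by linarith)
  have hPt : (0:ℝ) < (t - s') * (t' - t) := mul_pos (by linarith) (by linarith)
  have hC1' : 1 - lam ^ 2 ≤ A * ((s - s') * (t' - s)) := by
    have h3 : A * ((s - s') * (t' - s)) = -(A * ((s - s') * (s - t'))) := by ring
    linarith
  have hC2' : 1 - lam ^ 2 ≤ A * ((t - s') * (t' - t)) := by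
    have h3 : A * ((t - s') * (t' - t)) = -(A * ((t - s') * (t - t'))) := by ring
    linarith
  have hEs2 := hE_sq hRs
  have hEt2 := hE_sq hRt
  have hcoshα : Real.cosh α = (R s + 1) / (2 * hE (R s)) := by rw [hα]; exact cosh_half_log hRs
  have hcoshβ : Real.cosh β = (R t + 1) / (2 * hE (R t)) := by rw [hβ]; exact cosh_half_log hRt
  have hcoshα2 : Real.cosh α ^ 2 * (4 * ((s - s') * (t' - s))) = (t' - s') ^ 2 := by
    rw [hcoshα, div_pow, mul_pow, hEs2]
    rw [hR]
    simp only
    have n1 : t' - s ≠ 0 := by linarith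
    have n2 : s - s' ≠ 0 := by linarith
    field_simp
    ring
  have hcoshβ2 : Real.cosh β ^ 2 * (4 * ((t - s') * (t' - t))) = (t' - s') ^ 2 := by
    rw [hcoshβ, div_pow, mul_pow, hEt2]
    rw [hR]
    simp only
    have n1 : t' - t ≠ 0 := by linarith
    have n2 : t - s' ≠ 0 := by linarith
    field_simp
    ring
  have keyα : (1 - lam ^ 2) * (t' - s') ^ 2 ≤ 4 * ((s - s') * (t' - s)) := by
    have e1 := mul_le_mul_of_nonneg_right hC1' (sq_nonneg (t' - s'))
    have e2 : A * ((s - s') * (t' - s)) * (t' - s') ^ 2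
        = (s - s') * (t' - s) * (A * (t' - s') ^ 2) := by ring
    have e3 := mul_le_mul_of_nonneg_left hC3 hPs.le
    have e4 : (s - s') * (t' - s) * 4 = 4 * ((s - s') * (t' - s)) := by ring
    linarith
  have keyβ : (1 - lam ^ 2) * (t' - s') ^ 2 ≤ 4 * ((t - s') * (t' - t)) := by
    have e1 := mul_le_mul_of_nonneg_right hC2' (sq_nonneg (t' - s'))
    have e2 : A * ((t - s') * (t' - t)) * (t' - s') ^ 2
        = (t - s') * (t' - t) * (A * (t' - s') ^ 2) := by ring
    have e3 := mul_le_mul_of_nonneg_left hC3 hPt.le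
    have e4 : (t - s') * (t' - t) * 4 = 4 * ((t - s') * (t' - t)) := by ring
    linarith
  have hlam2 : (0:ℝ) < 1 - lam ^ 2 := by linarith
  have sq_step : ∀ u v : ℝ, Real.cosh u ^ 2 * (4 * v) = (t' - s') ^ 2 → 0 < v →
      (1 - lam ^ 2) * (t' - s') ^ 2 ≤ 4 * v → Real.cosh u ≤ Real.cosh rho := by
    intro u v huv hv hkey
    have hsq : Real.cosh u ^ 2 ≤ Real.cosh rho ^ 2 := by
      have hcu : Real.cosh u ^ 2 = (t' - s') ^ 2 / (4 * v) := by
        rw [eq_div_iff (by positivity)]; exact huv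
      have hcr : Real.cosh rho ^ 2 = 1 / (1 - lam ^ 2) := by
        rw [eq_div_iff (ne_of_gt hlam2)]; exact hcoshrho2
      rw [hcu, hcr, div_le_div_iff₀ (by positivity) hlam2]
      have e : (t' - s') ^ 2 * (1 - lam ^ 2) = (1 - lam ^ 2) * (t' - s') ^ 2 := by ring
      rw [e]
      linarith
    exact le_of_sq_le_sq' (Real.cosh_pos u) (Real.cosh_pos rho) hsq
  have hcαρ : Real.cosh α ≤ Real.cosh rho := sq_step α _ hcoshα2 hPs keyα
  have hcβρ : Real.cosh β ≤ Real.cosh rho := sq_step β _ hcoshβ2 hPt keyβ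
  have habsα : |α| ≤ rho := by
    have := Real.cosh_le_cosh.1 hcαρ
    rwa [abs_of_pos hrho0] at this
  have habsβ : |β| ≤ rho := by
    have := Real.cosh_le_cosh.1 hcβρ
    rwa [abs_of_pos hrho0] at this
  -- D2
  have hD2pos : (0:ℝ) < (β - α) / 2 := by linarith
  have hD2rho : (β - α) / 2 ≤ rho := by
    have h1 := abs_le.1 habsα
    have h2 := abs_le.1 habsβ
    linarith [h1.1, h2.2]
  have hcothD : 1 / lam ≤ Real.cosh ((β - α) / 2) / Real.sinh ((β - α) / 2) := by
    rw [← hcothrho]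
    exact coth_antitone hD2pos hD2rho
  have hargs : (p + mm / 2 + (q + mm / 2)) / 2 = (β - α) / 2 := by
    rw [hp, hq, hmm]; ring
  rw [hargs] at hmid
  -- chain
  have hL : mm * (2 * (1 / lam)) ≤ Real.log (t * (1 - s) / (-s * (t - 1))) := by
    have h1 : mm * (2 * (1 / lam)) ≤ mm * (2 * (Real.cosh ((β - α)/2) / Real.sinh ((β - α)/2))) :=
      mul_le_mul_of_nonneg_left (by linarith) hm0.le
    have h2 : mm * (2 * (Real.cosh ((β - α)/2) / Real.sinh ((β - α)/2)))
        ≤ mm * (Real.cosh (p + mm/2) / Real.sinh (p + mm/2))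
          + mm * (Real.cosh (q + mm/2) / Real.sinh (q + mm/2)) := by
      have h3 := mul_le_mul_of_nonneg_left hmid hm0.le
      have e : mm * (Real.cosh (p + mm / 2) / Real.sinh (p + mm / 2)
          + Real.cosh (q + mm / 2) / Real.sinh (q + mm / 2))
          = mm * (Real.cosh (p + mm/2) / Real.sinh (p + mm/2))
            + mm * (Real.cosh (q + mm/2) / Real.sinh (q + mm/2)) := by ring
      linarith
    rw [hlogsplit]
    linarith
  -- conclude
  have hgoalL : 1 / 2 * Real.log (t' * (1 - s') / (-s' * (t' - 1))) = mm := by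
    have hargeq : t' * (1 - s') / (-s' * (t' - 1)) = R 1 / R 0 := by
      rw [hR]
      simp only
      have n1 : t' - 1 ≠ 0 := by linarith
      have n2 : -s' ≠ 0 := by linarith
      have n3 : t' ≠ 0 := by linarith
      have n4 : t' - 0 ≠ 0 := by norm_num; linarith
      field_simp
      ring
    rw [hargeq, Real.log_div (ne_of_gt hR1) (ne_of_gt hR0), hmm, hb, ha]
    ring
  rw [hgoalL]
  have hinv : lam * (1 / lam) = 1 := mul_one_div_cancel (ne_of_gt hlam0)
  have h3 := mul_le_mul_of_nonneg_left hL hlam0.le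
  have e : lam * (mm * (2 * (1 / lam))) = 2 * mm * (lam * (1 / lam)) := by ring
  rw [e, hinv] at h3
  linarith



lemma line_ratio {E : Type*} [NormedAddCommGroup E] [NormedSpace ℝ E] {x y x1 y1 : E} {s t : ℝ}
    (hs : s < 0) (ht : 1 < t) (hxy : x ≠ y)
    (hx1 : x1 = x + s • (y - x)) (hy1 : y1 = x + t • (y - x)) :
    ‖x - y1‖ * ‖y - x1‖ / (‖x - x1‖ * ‖y - y1‖) = t * (1 - s) / (-s * (t - 1)) := by
  have hv : y - x ≠ 0 := sub_ne_zero.2 (Ne.symm hxy)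
  have hn : 0 < ‖y - x‖ := norm_pos_iff.2 hv
  have e1 : x - y1 = -(t • (y - x)) := by rw [hy1]; module
  have e2 : y - x1 = (1 - s) • (y - x) := by rw [hx1]; module
  have e3 : x - x1 = -(s • (y - x)) := by rw [hx1]; module
  have e4 : y - y1 = (1 - t) • (y - x) := by rw [hy1]; module
  rw [e1, e2, e3, e4, norm_neg, norm_neg, norm_smul, norm_smul, norm_smul, norm_smul,
    Real.norm_eq_abs, Real.norm_eq_abs, Real.norm_eq_abs, Real.norm_eq_abs,
    abs_of_pos (by linarith : (0:ℝ) < t), abs_of_pos (by linarith : (0:ℝ) < 1 - s),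
    abs_of_neg hs, abs_of_neg (by linarith : 1 - t < 0)]
  have d1 : -s * ‖y - x‖ * (-(1 - t) * ‖y - x‖) ≠ 0 :=
    ne_of_gt (mul_pos (mul_pos (by linarith) hn) (mul_pos (by linarith) hn))
  have d2 : -s * (t - 1) ≠ 0 := ne_of_gt (mul_pos (by linarith) (by linarith))
  rw [div_eq_div_iff d1 d2]
  ring

lemma quad_norm {E : Type*} [NormedAddCommGroup E] [InnerProductSpace ℝ E] {u w : E} {s' t' : ℝ}
    (hst : s' ≠ t') (h1 : ‖u + s' • w‖ = 1) (h2 : ‖u + t' • w‖ = 1) (σ : ℝ) :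
    ‖u + σ • w‖ ^ 2 = 1 + ‖w‖ ^ 2 * ((σ - s') * (σ - t')) := by
  have expand : ∀ c : ℝ, ‖u + c • w‖ ^ 2
      = ‖u‖ ^ 2 + 2 * (c * inner ℝ u w) + c ^ 2 * ‖w‖ ^ 2 := by
    intro c
    rw [norm_add_sq_real, real_inner_smul_right, norm_smul, mul_pow, Real.norm_eq_abs, sq_abs]
  have e1 : ‖u‖ ^ 2 + 2 * (s' * inner ℝ u w) + s' ^ 2 * ‖w‖ ^ 2 = 1 := by
    rw [← expand s', h1, one_pow]
  have e2 : ‖u‖ ^ 2 + 2 * (t' * inner ℝ u w) + t' ^ 2 * ‖w‖ ^ 2 = 1 := by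
    rw [← expand t', h2, one_pow]
  have h3 : (s' - t') * (2 * (inner ℝ u w : ℝ) + (s' + t') * ‖w‖ ^ 2) = 0 := by
    linear_combination e1 - e2
  have hB : 2 * (inner ℝ u w : ℝ) = -(s' + t') * ‖w‖ ^ 2 := by
    rcases mul_eq_zero.1 h3 with h4 | h4
    · exact absurd (sub_eq_zero.1 h4) hst
    · linarith
  have hu : ‖u‖ ^ 2 = 1 + s' * t' * ‖w‖ ^ 2 := by linear_combination e1 - s' * hB
  rw [expand σ]
  linear_combination hu + σ * hB

/-- If `f : ℝ^d → ℝ^d` is a linear map sending the open unit ball `𝕂^d` into the closed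
Euclidean ball of radius `λ < 1` centered at the origin, then `f` restricted to `𝕂^d` is
`λ`-Lipschitz with respect to the hyperbolic metric of the Klein model. -/
theorem linear_map_klein_lipschitz {d : ℕ} (lam : ℝ) (hlam : lam < 1)
    (f : EuclideanSpace ℝ (Fin d) →ₗ[ℝ] EuclideanSpace ℝ (Fin d))
    (hf : ∀ x : EuclideanSpace ℝ (Fin d), ‖x‖ < 1 → ‖f x‖ ≤ lam) :
    ∀ x y : EuclideanSpace ℝ (Fin d), ‖x‖ < 1 → ‖y‖ < 1 →
      ∀ r r' : ℝ, kleinDistRel x y r → kleinDistRel (f x) (f y) r' →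
        r' ≤ lam * r := by
  intro x y hx hy r r' hr hr'
  have hf0 : (0:ℝ) ≤ lam := by
    have h := hf 0 (by simp)
    rw [map_zero, norm_zero] at h
    exact h
  have hball : ∀ z : EuclideanSpace ℝ (Fin d), ‖z‖ ≤ 1 → ‖f z‖ ≤ lam := by
    intro z hz
    rcases lt_or_eq_of_le hz with hlt | heq
    · exact hf z hlt
    · by_contra hcon
      push_neg at hcon
      have hfz : 0 < ‖f z‖ := lt_of_le_of_lt hf0 hcon
      set c : ℝ := (lam + ‖f z‖) / (2 * ‖f z‖) with hc
      have hc0 : 0 < c := by positivity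
      have hc1 : c < 1 := by rw [hc, div_lt_one (by positivity)]; linarith
      have hzc : ‖c • z‖ < 1 := by
        rw [norm_smul, Real.norm_eq_abs, abs_of_pos hc0, heq, mul_one]
        exact hc1
      have h5 := hf _ hzc
      rw [map_smul, norm_smul, Real.norm_eq_abs, abs_of_pos hc0] at h5
      have h6 : c * ‖f z‖ = (lam + ‖f z‖) / 2 := by
        rw [hc]; field_simp
      rw [h6] at h5
      linarith
  rcases hr' with ⟨hfeq, hr'0⟩ | ⟨x2, y2, hnx2, hny2, ⟨s', hs', hx2⟩, ⟨t', ht', hy2⟩, hr'eq⟩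
  · -- r' = 0 : need 0 ≤ lam * r
    rw [hr'0]
    rcases hr with ⟨hxy, hr0⟩ | ⟨x1, y1, hnx1, hny1, ⟨s, hs, hx1⟩, ⟨t, ht, hy1⟩, hreq⟩
    · rw [hr0, mul_zero]
    · have hxy : x ≠ y := by
        intro h
        rw [h] at hx1
        simp at hx1
        rw [hx1] at hnx1
        rw [hnx1] at hy
        exact lt_irrefl 1 hy
      have harg := line_ratio hs ht hxy hx1 hy1
      have hden : (0:ℝ) < -s * (t - 1) := mul_pos (by linarith) (by linarith)
      have hone : (1:ℝ) ≤ t * (1 - s) / (-s * (t - 1)) := by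
        rw [le_div_iff₀ hden]
        have e : t * (1 - s) - 1 * (-s * (t - 1)) = t - s := by ring
        linarith
      have hr0 : 0 ≤ r := by
        rw [hreq, harg]
        have := Real.log_nonneg hone
        linarith
      exact mul_nonneg hf0 hr0
  · -- main case
    have hfx := hf x hx
    have hfy := hf y hy
    have hfxy : f x ≠ f y := by
      intro heq2
      rw [heq2] at hx2
      simp at hx2
      rw [hx2] at hnx2
      rw [hnx2] at hfy
      linarith
    have hxy : x ≠ y := by
      intro h
      exact hfxy (by rw [h])
    rcases hr with ⟨h1, _⟩ | ⟨x1, y1, hnx1, hny1, ⟨s, hs, hx1⟩, ⟨t, ht, hy1⟩, hreq⟩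
    · exact absurd h1 hxy
    have hlam0 : 0 < lam := by
      rcases lt_or_eq_of_le hf0 with h | h
      · exact h
      · exfalso
        apply hfxy
        have hx0 : ‖f x‖ ≤ 0 := by rw [h]; exact hfx
        have hy0 : ‖f y‖ ≤ 0 := by rw [h]; exact hfy
        have : f x = 0 := norm_le_zero_iff.1 hx0
        have h2 : f y = 0 := norm_le_zero_iff.1 hy0
        rw [this, h2]
    set w : EuclideanSpace ℝ (Fin d) := f y - f x with hwdef
    have hw : w ≠ 0 := sub_ne_zero.2 (Ne.symm hfxy)
    have hA : 0 < ‖w‖ ^ 2 := pow_pos (norm_pos_iff.2 hw) 2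
    have hst' : s' ≠ t' := by linarith
    have hx2' : x2 = f x + s' • w := by rw [hx2, hwdef]
    have hy2' : y2 = f x + t' • w := by rw [hy2, hwdef]
    have hq1 : ‖f x + s' • w‖ = 1 := by rw [← hx2']; exact hnx2
    have hq2 : ‖f x + t' • w‖ = 1 := by rw [← hy2']; exact hny2
    have hquad := quad_norm hst' hq1 hq2
    -- C3
    have hC3 : ‖w‖ ^ 2 * (t' - s') ^ 2 ≤ 4 := by
      have h0 := hquad ((s' + t') / 2)
      have hnn : (0:ℝ) ≤ ‖f x + ((s' + t') / 2) • w‖ ^ 2 := by positivity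
      have e : ‖w‖ ^ 2 * (((s' + t') / 2 - s') * ((s' + t') / 2 - t'))
          = -(‖w‖ ^ 2 * (t' - s') ^ 2) / 4 := by ring
      linarith
    -- C1 : image of x1
    have hfx1 : f x1 = f x + s • w := by
      rw [hx1, map_add, map_smul, map_sub, hwdef]
    have hfy1 : f y1 = f x + t • w := by
      rw [hy1, map_add, map_smul, map_sub, hwdef]
    have hbx1 : ‖f x + s • w‖ ≤ lam := by
      rw [← hfx1]; exact hball x1 (le_of_eq hnx1)
    have hby1 : ‖f x + t • w‖ ≤ lam := by
      rw [← hfy1]; exact hball y1 (le_of_eq hny1)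
    have hC1 : ‖w‖ ^ 2 * ((s - s') * (s - t')) ≤ lam ^ 2 - 1 := by
      have h0 := hquad s
      have h1 : ‖f x + s • w‖ ^ 2 ≤ lam ^ 2 := by
        apply pow_le_pow_left₀ (norm_nonneg _) hbx1
      linarith
    have hC2 : ‖w‖ ^ 2 * ((t - s') * (t - t')) ≤ lam ^ 2 - 1 := by
      have h0 := hquad t
      have h1 : ‖f x + t • w‖ ^ 2 ≤ lam ^ 2 := by
        apply pow_le_pow_left₀ (norm_nonneg _) hby1
      linarith
    -- ratios
    have hargdom := line_ratio hs ht hxy hx1 hy1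
    have hargimg := line_ratio hs' ht' hfxy hx2 hy2
    have hmain := main_real hlam0 hlam hA hs ht hs' ht' hC1 hC2 hC3
    rw [hr'eq, hreq, hargdom, hargimg]
    convert hmain using 3
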